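/- Let $q \ge 2$, let $A_{ij} \ge 0$ for $1 \le i < j \le q$ with the graph $\{(i,j) : A_{ij} > 0\}$ connected on $\{1,\dots,q\}$, and suppose the unit vectors $\{\mathbf{n}_{ij}\}_{A_{ij}>0} \subset \mathbb{R}^n$ (with $\mathbf{n}_{ji} = -\mathbf{n}_{ij}$) satisfy the matrix identity $M^T L_A^{-1} M = N$, where $M = \sum_{i<j} A_{ij}(e_i - e_j)\mathbf{n}_{ij}^T$, $N = \sum_{i<j} A_{ij}\mathbf{n}_{ij}\mathbf{n}_{ij}^T$, and $L_A^{-1}$ is the inverse of $L_A = \sum_{i<j} A_{ij}(e_i-e_j)(e_i-e_j)^T$ on $E^{(q-1)}$. Then there exists a linear map $B: E^{(q-1)} \to \mathbb{R}^n$ with $\mathbf{n}_{ij} = B(e_j - e_i)$ for all $i \neq j$ with $A_{ij} > 0$. -/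

import Mathlib

open Matrix

noncomputable section

/-- `e_i - e_j` as a vector of `ℝ^q`. -/
def dvec (q : ℕ) (i j : Fin q) : Fin q → ℝ :=
  fun k => (if k = i then (1 : ℝ) else 0) - (if k = j then 1 else 0)

/-- The matrix `L_A = ∑_{i<j} A_{ij} (e_i - e_j)(e_i - e_j)ᵀ`. -/
def LAmat {q : ℕ} (A : Fin q → Fin q → ℝ) : Matrix (Fin q) (Fin q) ℝ :=
  ∑ p ∈ Finset.univ.filter (fun p : Fin q × Fin q => p.1 < p.2),
    A p.1 p.2 • Matrix.vecMulVec (dvec q p.1 p.2) (dvec q p.1 p.2)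

/-- The matrix `M = ∑_{i<j} A_{ij} (e_i - e_j) n_{ij}ᵀ`. -/
def Mmat {q n : ℕ} (A : Fin q → Fin q → ℝ) (nv : Fin q → Fin q → (Fin n → ℝ)) :
    Matrix (Fin q) (Fin n) ℝ :=
  ∑ p ∈ Finset.univ.filter (fun p : Fin q × Fin q => p.1 < p.2),
    A p.1 p.2 • Matrix.vecMulVec (dvec q p.1 p.2) (nv p.1 p.2)

/-- The matrix `N = ∑_{i<j} A_{ij} n_{ij} n_{ij}ᵀ`. -/
def Nmat {q n : ℕ} (A : Fin q → Fin q → ℝ) (nv : Fin q → Fin q → (Fin n → ℝ)) :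
    Matrix (Fin n) (Fin n) ℝ :=
  ∑ p ∈ Finset.univ.filter (fun p : Fin q × Fin q => p.1 < p.2),
    A p.1 p.2 • Matrix.vecMulVec (nv p.1 p.2) (nv p.1 p.2)

/-- Equality case of the matrix Cauchy–Schwarz inequality for the normals of a cluster:
if `A_{ij} ≥ 0` is symmetric with connected positivity graph, the `n_{ij}` are antisymmetric and
unit vectors when `A_{ij} > 0`, `L'` inverts `L_A` on `E^{(q-1)}`, and `Mᵀ L_A⁻¹ M = N`, then
there is a linear map `B` with `n_{ij} = B(e_j - e_i)` whenever `A_{ij} > 0`. -/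
lemma dvec_sum' {q : ℕ} (i j : Fin q) : ∑ k, dvec q i j k = 0 := by
  simp [dvec, Finset.sum_sub_distrib]

lemma dvec_swap' {q : ℕ} (i j : Fin q) : dvec q j i = -dvec q i j := by
  funext k; simp [dvec]

lemma vv_sub {n m : ℕ} (a b : Fin n → ℝ) (c d : Fin m → ℝ) :
    vecMulVec (a - b) (c - d) =
      vecMulVec a c - vecMulVec a d - vecMulVec b c + vecMulVec b d := by
  ext i j
  simp [vecMulVec_apply]
  ring

lemma vv_xD {m q n : ℕ} (x : Fin m → ℝ) (v : Fin q → ℝ) (D : Matrix (Fin q) (Fin n) ℝ) :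
    vecMulVec x (Dᵀ *ᵥ v) = vecMulVec x v * D := by
  ext a b
  simp [vecMulVec_apply, Matrix.mul_apply, Matrix.mulVec, dotProduct,
    Finset.mul_sum]
  exact Finset.sum_congr rfl fun k _ => by ring

lemma vv_Dx {m q n : ℕ} (x : Fin m → ℝ) (v : Fin q → ℝ) (D : Matrix (Fin q) (Fin n) ℝ) :
    vecMulVec (Dᵀ *ᵥ v) x = Dᵀ * vecMulVec v x := by
  ext a b
  simp [vecMulVec_apply, Matrix.mul_apply, Matrix.mulVec, dotProduct,
    Finset.sum_mul]
  exact Finset.sum_congr rfl fun k _ => by ring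

lemma vv_DD {q n : ℕ} (u v : Fin q → ℝ) (D : Matrix (Fin q) (Fin n) ℝ) :
    vecMulVec (Dᵀ *ᵥ u) (Dᵀ *ᵥ v) = Dᵀ * vecMulVec u v * D := by
  rw [vv_xD, vv_Dx]

lemma vv_transpose {m n : ℕ} (u : Fin m → ℝ) (v : Fin n → ℝ) :
    (vecMulVec u v)ᵀ = vecMulVec v u := by
  ext a b; simp [vecMulVec_apply, mul_comm]

lemma trace_vv {n : ℕ} (w : Fin n → ℝ) :
    Matrix.trace (vecMulVec w w) = ∑ a, w a * w a := by
  simp [Matrix.trace, Matrix.diag, vecMulVec_apply]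

theorem stmt18 {q n : ℕ} (hq : 2 ≤ q)
    (A : Fin q → Fin q → ℝ) (hA : ∀ i j, 0 ≤ A i j) (hAsymm : ∀ i j, A i j = A j i)
    (nv : Fin q → Fin q → (Fin n → ℝ))
    (hanti : ∀ i j, nv j i = -nv i j)
    (hunit : ∀ i j, i ≠ j → 0 < A i j → ∑ a, (nv i j a) ^ 2 = 1)
    (hconn : (SimpleGraph.fromRel fun i j => 0 < A i j).Connected)
    (L' : Matrix (Fin q) (Fin q) ℝ)
    (hL'inv : ∀ v : Fin q → ℝ, (∑ i, v i = 0) →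
      LAmat A *ᵥ (L' *ᵥ v) = v ∧ L' *ᵥ (LAmat A *ᵥ v) = v)
    (hL'E : ∀ v : Fin q → ℝ, (∑ i, v i = 0) → ∑ i, (L' *ᵥ v) i = 0)
    (heq : (Mmat A nv)ᵀ * L' * Mmat A nv = Nmat A nv) :
    ∃ B : (Fin q → ℝ) →ₗ[ℝ] (Fin n → ℝ),
      ∀ i j, i ≠ j → 0 < A i j → nv i j = B (dvec q j i) := by
  classical
  set F := Finset.univ.filter (fun p : Fin q × Fin q => p.1 < p.2) with hF
  set C : Matrix (Fin q) (Fin n) ℝ := L' * Mmat A nv with hC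
  -- columns of M sum to zero
  have hcol : ∀ c, ∑ i, Mmat A nv i c = 0 := by
    intro c
    simp only [Mmat, Matrix.sum_apply, Matrix.smul_apply, Matrix.vecMulVec_apply,
      smul_eq_mul]
    rw [Finset.sum_comm]
    refine Finset.sum_eq_zero fun p _ => ?_
    have h0 : ∑ i : Fin q, dvec q p.1 p.2 i = 0 := dvec_sum' _ _
    have : ∑ i, A p.1 p.2 * (dvec q p.1 p.2 i * nv p.1 p.2 c)
        = (A p.1 p.2 * nv p.1 p.2 c) * ∑ i, dvec q p.1 p.2 i := by
      rw [Finset.mul_sum]; exact Finset.sum_congr rfl fun i _ => by ring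
    rw [this, h0, mul_zero]
  -- L * C = M
  have hLC : LAmat A * C = Mmat A nv := by
    ext i c
    have h := (hL'inv (fun k => Mmat A nv k c) (hcol c)).1
    have h2 := congrFun h i
    simpa [hC, Matrix.mul_apply, Matrix.mulVec, dotProduct] using h2
  -- Mᵀ C = N
  have hMC : (Mmat A nv)ᵀ * C = Nmat A nv := by
    rw [hC, ← Matrix.mul_assoc]; exact heq
  have hNs : (Nmat A nv)ᵀ = Nmat A nv := by
    unfold Nmat
    rw [Matrix.transpose_sum]
    exact Finset.sum_congr rfl fun p _ => by rw [Matrix.transpose_smul, vv_transpose]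
  have hCM : Cᵀ * Mmat A nv = Nmat A nv := by
    have h := congrArg Matrix.transpose hMC
    rwa [Matrix.transpose_mul, Matrix.transpose_transpose, hNs] at h
  -- transpose of M
  have hMt : (Mmat A nv)ᵀ = ∑ p ∈ F, A p.1 p.2 • vecMulVec (nv p.1 p.2) (dvec q p.1 p.2) := by
    unfold Mmat
    rw [Matrix.transpose_sum]
    exact Finset.sum_congr rfl fun p _ => by rw [Matrix.transpose_smul, vv_transpose]
  -- the residual vectors
  set w : Fin q × Fin q → Fin n → ℝ :=
    fun p => nv p.1 p.2 - Cᵀ *ᵥ dvec q p.1 p.2 with hw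
  have hS : ∑ p ∈ F, A p.1 p.2 • vecMulVec (w p) (w p) = (0 : Matrix (Fin n) (Fin n) ℝ) := by
    have expand : ∀ p : Fin q × Fin q, vecMulVec (w p) (w p)
        = vecMulVec (nv p.1 p.2) (nv p.1 p.2)
          - vecMulVec (nv p.1 p.2) (dvec q p.1 p.2) * C
          - Cᵀ * vecMulVec (dvec q p.1 p.2) (nv p.1 p.2)
          + Cᵀ * vecMulVec (dvec q p.1 p.2) (dvec q p.1 p.2) * C := by
      intro p
      rw [hw, vv_sub, vv_xD, vv_Dx, vv_DD]
    calc ∑ p ∈ F, A p.1 p.2 • vecMulVec (w p) (w p)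
        = (∑ p ∈ F, A p.1 p.2 • vecMulVec (nv p.1 p.2) (nv p.1 p.2))
          - (∑ p ∈ F, A p.1 p.2 • vecMulVec (nv p.1 p.2) (dvec q p.1 p.2)) * C
          - Cᵀ * (∑ p ∈ F, A p.1 p.2 • vecMulVec (dvec q p.1 p.2) (nv p.1 p.2))
          + Cᵀ * (∑ p ∈ F, A p.1 p.2 • vecMulVec (dvec q p.1 p.2) (dvec q p.1 p.2)) * C := by
          rw [Finset.sum_congr rfl fun p _ => by rw [expand p]]
          simp only [smul_sub, smul_add, Finset.sum_sub_distrib, Finset.sum_add_distrib,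
            Matrix.sum_mul, Matrix.mul_sum, Matrix.smul_mul, Matrix.mul_smul]
      _ = Nmat A nv - (Mmat A nv)ᵀ * C - Cᵀ * Mmat A nv + Cᵀ * LAmat A * C := by
          rw [← hMt]; rfl
      _ = 0 := by
          rw [Matrix.mul_assoc Cᵀ (LAmat A) C, hLC, hMC, hCM, Nmat]
          abel
  -- trace
  have htr : ∑ p ∈ F, A p.1 p.2 * (∑ a, w p a * w p a) = 0 := by
    have h := congrArg Matrix.trace hS
    rw [Matrix.trace_sum] at h
    simpa [Matrix.trace_smul, trace_vv, smul_eq_mul, dotProduct] using h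
  have hzero : ∀ p ∈ F, A p.1 p.2 * (∑ a, w p a * w p a) = 0 :=
    (Finset.sum_eq_zero_iff_of_nonneg fun p _ =>
      mul_nonneg (hA _ _) (Finset.sum_nonneg fun a _ => mul_self_nonneg _)).1 htr
  have key : ∀ i j : Fin q, i < j → 0 < A i j → nv i j = Cᵀ *ᵥ dvec q i j := by
    intro i j hij hpos
    have hp : (i, j) ∈ F := by simp [hF, hij]
    have h0 := hzero (i, j) hp
    have hs : ∑ a, w (i, j) a * w (i, j) a = 0 := by
      rcases mul_eq_zero.1 h0 with h | h
      · exact absurd h (ne_of_gt hpos)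
      · exact h
    have hwz : ∀ a, w (i, j) a = 0 := fun a =>
      mul_self_eq_zero.1 <|
        (Finset.sum_eq_zero_iff_of_nonneg fun a _ => mul_self_nonneg _).1 hs a
          (Finset.mem_univ a)
    funext a
    have := hwz a
    simp only [hw, Pi.sub_apply] at this
    linarith
  refine ⟨-(Matrix.mulVecLin Cᵀ), ?_⟩
  intro i j hne hpos
  rcases lt_or_gt_of_ne hne with h | h
  · rw [key i j h hpos]
    rw [LinearMap.neg_apply, Matrix.mulVecLin_apply, dvec_swap' i j,
      Matrix.mulVec_neg, neg_neg]
  · have hpos' : 0 < A j i := by rw [← hAsymm]; exact hpos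
    have hk := key j i h hpos'
    have hn : nv i j = -nv j i := by rw [hanti i j, neg_neg]
    rw [hn, hk]
    rw [LinearMap.neg_apply, Matrix.mulVecLin_apply]

end
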